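/- For each n ∈ ℕ, let x_1^(n), ..., x_n^(n) be nonnegative reals. If (1/n)·∑_{i=1}^n x_i^(n) → 0 as n → ∞, then there exist nonempty subsets K_n ⊆ {1,...,n} such that |K_n|/n → 1 and max_{i ∈ K_n} x_i^(n) → 0. -/

import Mathlib

open Filter Finset

/-- Averaging selection lemma: for a triangular array of nonnegative reals whose
averages tend to zero, one can select nonempty index sets `K_n` of asymptotically
full density on which the values tend to zero uniformly. -/
theorem converging_averages (x : (n : ℕ) → Fin (n + 1) → ℝ)
    (hnonneg : ∀ n i, 0 ≤ x n i)
    (havg : Tendsto (fun n => (∑ i, x n i) / (n + 1 : ℝ)) atTop (nhds 0)) :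
    ∃ K : (n : ℕ) → Finset (Fin (n + 1)), ∃ hne : ∀ n, (K n).Nonempty,
      Tendsto (fun n => ((K n).card : ℝ) / (n + 1 : ℝ)) atTop (nhds 1) ∧
      Tendsto (fun n => (K n).sup' (hne n) (x n)) atTop (nhds 0) := by
  set a : ℕ → ℝ := fun n => (∑ i, x n i) / (n + 1 : ℝ) with ha_def
  have hnpos : ∀ n : ℕ, (0 : ℝ) < n + 1 := by
    intro n; positivity
  have ha0 : ∀ n, 0 ≤ a n := by
    intro n
    exact div_nonneg (Finset.sum_nonneg fun i _ => hnonneg n i) (hnpos n).le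
  have hsum : ∀ n, (∑ i, x n i) = (n + 1 : ℝ) * a n := by
    intro n
    rw [ha_def]
    field_simp
  set t : ℕ → ℝ := fun n => a n + Real.sqrt (a n) with ht_def
  have hat : ∀ n, a n ≤ t n := fun n => le_add_of_nonneg_right (Real.sqrt_nonneg _)
  have hst : ∀ n, Real.sqrt (a n) ≤ t n := fun n => le_add_of_nonneg_left (ha0 n)
  set K : (n : ℕ) → Finset (Fin (n + 1)) :=
    fun n => Finset.univ.filter (fun i => x n i ≤ t n) with hK_def
  have hne : ∀ n, (K n).Nonempty := by
    intro n
    by_contra h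
    rw [Finset.not_nonempty_iff_eq_empty, hK_def, Finset.filter_eq_empty_iff] at h
    have hlt : ∀ i : Fin (n + 1), a n < x n i := by
      intro i
      exact lt_of_le_of_lt (hat n) (lt_of_not_ge (h (Finset.mem_univ i)))
    have : (∑ _i : Fin (n + 1), a n) < ∑ i, x n i :=
      Finset.sum_lt_sum_of_nonempty Finset.univ_nonempty (fun i _ => hlt i)
    rw [Finset.sum_const, Finset.card_univ, Fintype.card_fin, hsum n] at this
    simp [nsmul_eq_mul] at this
  refine ⟨K, hne, ?_, ?_⟩
  · -- density
    have hcard : ∀ n : ℕ, ((n : ℝ) + 1) - (K n).card ≤ ((n : ℝ) + 1) * Real.sqrt (a n) := by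
      intro n
      set S : Finset (Fin (n + 1)) := Finset.univ.filter (fun i => ¬ (x n i ≤ t n)) with hS_def
      have hcards : (K n).card + S.card = n + 1 := by
        rw [hK_def, hS_def]
        simpa using Finset.card_filter_add_card_filter_not
          (s := (Finset.univ : Finset (Fin (n+1)))) (p := fun i => x n i ≤ t n)
      by_cases hz : a n = 0
      · -- all x are 0, S empty
        have hSempty : S = ∅ := by
          rw [hS_def, Finset.filter_eq_empty_iff]
          intro i _
          have hsum0 : (∑ i, x n i) = 0 := by rw [hsum n, hz, mul_zero]
          have hx0 : x n i = 0 :=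
            (Finset.sum_eq_zero_iff_of_nonneg (fun i _ => hnonneg n i)).mp hsum0 i
              (Finset.mem_univ i)
          rw [hx0]
          push_neg
          exact le_trans (ha0 n) (hat n)
        have : (K n).card = n + 1 := by
          have := hcards; rw [hSempty] at this; simpa using this
        rw [this]
        push_cast
        nlinarith [Real.sqrt_nonneg (a n), hnpos n]
      · have hapos : 0 < a n := lt_of_le_of_ne (ha0 n) (Ne.symm hz)
        have hsq : 0 < Real.sqrt (a n) := Real.sqrt_pos.mpr hapos
        -- Markov: S.card * sqrt(a n) ≤ sum ≤ (n+1) a n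
        have h1 : (S.card : ℝ) * Real.sqrt (a n) ≤ ∑ i ∈ S, x n i := by
          calc (S.card : ℝ) * Real.sqrt (a n) = ∑ _i ∈ S, Real.sqrt (a n) := by
                rw [Finset.sum_const, nsmul_eq_mul]
            _ ≤ ∑ i ∈ S, x n i := by
                apply Finset.sum_le_sum
                intro i hi
                rw [hS_def, Finset.mem_filter] at hi
                exact le_trans (hst n) (le_of_lt (lt_of_not_ge hi.2))
        have h2 : ∑ i ∈ S, x n i ≤ ∑ i, x n i :=
          Finset.sum_le_sum_of_subset_of_nonneg (Finset.subset_univ S)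
            (fun i _ _ => hnonneg n i)
        have h3 : (S.card : ℝ) * Real.sqrt (a n) ≤ (n + 1 : ℝ) * a n := by
          rw [← hsum n]; exact le_trans h1 h2
        have h4 : (S.card : ℝ) ≤ (n + 1 : ℝ) * Real.sqrt (a n) := by
          have h3' : (S.card : ℝ) * Real.sqrt (a n)
              ≤ ((n + 1 : ℝ) * Real.sqrt (a n)) * Real.sqrt (a n) := by
            nlinarith [Real.mul_self_sqrt (ha0 n)]
          exact le_of_mul_le_mul_right h3' hsq
        have h5 : (n + 1 : ℝ) - (K n).card = (S.card : ℝ) := by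
          have : ((K n).card : ℝ) + (S.card : ℝ) = (n : ℝ) + 1 := by
            exact_mod_cast congrArg (Nat.cast : ℕ → ℝ) hcards
          linarith
        linarith
    apply tendsto_of_tendsto_of_tendsto_of_le_of_le
      (g := fun n => 1 - Real.sqrt (a n)) (h := fun _ => (1 : ℝ))
    · have hsqrt : Tendsto (fun n => Real.sqrt (a n)) atTop (nhds 0) := by
        have := (Real.continuous_sqrt.tendsto 0).comp havg
        simpa [Function.comp_def] using this
      have := (tendsto_const_nhds (x := (1:ℝ)) (f := atTop)).sub hsqrt
      simpa using this
    · exact tendsto_const_nhds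
    · intro n
      simp only
      rw [le_div_iff₀ (hnpos n)]
      nlinarith [hcard n, Real.sqrt_nonneg (a n)]
    · intro n
      rw [div_le_one (hnpos n)]
      have : (K n).card ≤ n + 1 := by
        calc (K n).card ≤ Fintype.card (Fin (n + 1)) := Finset.card_le_univ _
          _ = n + 1 := Fintype.card_fin _
      exact_mod_cast this
  · -- sup tends to 0
    apply squeeze_zero (g := t)
    · intro n
      obtain ⟨i, hi⟩ := hne n
      exact le_trans (hnonneg n i) (Finset.le_sup' (x n) hi)
    · intro n
      apply Finset.sup'_le
      intro i hi
      rw [hK_def, Finset.mem_filter] at hi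
      exact hi.2
    · have hsqrt : Tendsto (fun n => Real.sqrt (a n)) atTop (nhds 0) := by
        have := (Real.continuous_sqrt.tendsto 0).comp havg
        simpa [Function.comp_def] using this
      have := havg.add hsqrt
      simpa using this
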